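/- Let α : U → ℝ be a smooth fixed-mode solution of the spin-s Teukolsky equation, set β := r^(−2s)·D^s·α and Λ̃ := Λ − 2s = −(ℓ+s)(ℓ−s+1). Then for every integer N ≥ 1 the following identity holds pointwise on U: ∂ᵥ( (D/r²)^(N−s) · ∂ᵤ( ((r²/D)∂ᵤ)^N β ) ) = (D/r²)^(N−s+1) · [ ( N(N+1−2s) + Λ̃ − ( (1−s)(1−2s) + 3N(N+1−2s) )·(2M/r) ) · ((r²/D)∂ᵤ)^N β − 2M · N(N−s)(N−2s) · ((r²/D)∂ᵤ)^(N−1) β ]. (This is the ∂ᵤ-commuted Teukolsky equation of Proposition 8.1, eq. (8.8), in scalar fixed-angular-mode form; note that the spin-weighted operator Δ̊−s has eigenvalue Λ̃ = Λ − 2s on the ℓ-th mode, and that the j = 1 term enters with the sign (−1)^j.) -/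

import Mathlib

open scoped ContDiff

noncomputable section

/-- Partial derivative with respect to the first (`u`) null coordinate. -/
def pdu (f : ℝ × ℝ → ℝ) : ℝ × ℝ → ℝ := fun p => deriv (fun x => f (x, p.2)) p.1

/-- Partial derivative with respect to the second (`v`) null coordinate. -/
def pdv (f : ℝ × ℝ → ℝ) : ℝ × ℝ → ℝ := fun p => deriv (fun y => f (p.1, y)) p.2

/-- `D = 1 - 2M/r`. -/
def Dfun (M : ℝ) (r : ℝ × ℝ → ℝ) : ℝ × ℝ → ℝ := fun p => 1 - 2 * M / r p

/-- The weighted transversal derivative operator `(r²/D)∂ᵤ`. -/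
def Pu (M : ℝ) (r f : ℝ × ℝ → ℝ) : ℝ × ℝ → ℝ := fun p => (r p) ^ 2 / Dfun M r p * pdu f p

/-- `α` is a fixed-mode solution of the spin-`s` Teukolsky equation (Teuk:s) on `U`,
projected to spherical-harmonic number `ℓ`, i.e.
`∂ᵤ(r^(−2s) D^s ∂ᵥα) = D^(s+1) r^(−2−2s) Λ α − 2M D^(s+1) r^(−3−2s) (1+s)(1+2s) α`
with `Λ = −(ℓ−s)(ℓ+s+1)`. -/
def TeukSol (M : ℝ) (r : ℝ × ℝ → ℝ) (U : Set (ℝ × ℝ)) (s ℓ : ℤ) (α : ℝ × ℝ → ℝ) : Prop :=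
  ∀ p ∈ U,
    pdu (fun q => (r q) ^ (-(2 * s)) * (Dfun M r q) ^ s * pdv α q) p =
      (Dfun M r p) ^ (s + 1) * (r p) ^ (-2 - 2 * s) * ((-(ℓ - s) * (ℓ + s + 1) : ℤ) : ℝ) * α p
        - 2 * M * (Dfun M r p) ^ (s + 1) * (r p) ^ (-3 - 2 * s) *
          (((1 + s) * (1 + 2 * s) : ℤ) : ℝ) * α p

set_option linter.unusedVariables false
set_option linter.unusedSectionVars false

section Infra

variable {f g : ℝ × ℝ → ℝ} {p : ℝ × ℝ} {U : Set (ℝ × ℝ)}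

lemma hle1 : (∞ : WithTop ℕ∞) ≠ 0 := by simp

lemma hle2 : (2 : WithTop ℕ∞) ≤ ∞ := by
  have : ((2:ℕ∞) : WithTop ℕ∞) ≤ ((⊤:ℕ∞) : WithTop ℕ∞) := by exact_mod_cast le_top
  exact this

lemma hasDerivAt_sliceU (hf : DifferentiableAt ℝ f p) :
    HasDerivAt (fun x => f (x, p.2)) (pdu f p) p.1 := by
  have h1 : DifferentiableAt ℝ (fun x : ℝ => f (x, p.2)) p.1 :=
    hf.comp p.1 (differentiableAt_id.prodMk (differentiableAt_const _))
  exact h1.hasDerivAt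

lemma hasDerivAt_sliceV (hf : DifferentiableAt ℝ f p) :
    HasDerivAt (fun y => f (p.1, y)) (pdv f p) p.2 := by
  have h1 : DifferentiableAt ℝ (fun y : ℝ => f (p.1, y)) p.2 :=
    hf.comp p.2 ((differentiableAt_const _).prodMk differentiableAt_id)
  exact h1.hasDerivAt

lemma pdu_congr (h : f =ᶠ[nhds p] g) : pdu f p = pdu g p := by
  have ht : Filter.Tendsto (fun x : ℝ => (x, p.2)) (nhds p.1) (nhds p) := by
    have : ContinuousAt (fun x : ℝ => (x, p.2)) p.1 :=
      (continuous_id.prodMk continuous_const).continuousAt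
    simpa using this.tendsto
  exact Filter.EventuallyEq.deriv_eq (h.comp_tendsto ht)

lemma pdv_congr (h : f =ᶠ[nhds p] g) : pdv f p = pdv g p := by
  have ht : Filter.Tendsto (fun y : ℝ => (p.1, y)) (nhds p.2) (nhds p) := by
    have : ContinuousAt (fun y : ℝ => (p.1, y)) p.2 :=
      (continuous_const.prodMk continuous_id).continuousAt
    simpa using this.tendsto
  exact Filter.EventuallyEq.deriv_eq (h.comp_tendsto ht)

lemma pdu_congrOn (hU : IsOpen U) (hp : p ∈ U) (h : ∀ q ∈ U, f q = g q) :
    pdu f p = pdu g p :=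
  pdu_congr (Filter.eventually_iff_exists_mem.2 ⟨U, hU.mem_nhds hp, h⟩)

lemma pdv_congrOn (hU : IsOpen U) (hp : p ∈ U) (h : ∀ q ∈ U, f q = g q) :
    pdv f p = pdv g p :=
  pdv_congr (Filter.eventually_iff_exists_mem.2 ⟨U, hU.mem_nhds hp, h⟩)

lemma pdu_eq_fderiv (hf : DifferentiableAt ℝ f p) :
    pdu f p = fderiv ℝ f p (1, 0) := by
  have h2 : HasDerivAt (fun x : ℝ => (x, p.2)) ((1 : ℝ), (0 : ℝ)) p.1 :=
    (hasDerivAt_id p.1).prodMk (hasDerivAt_const p.1 p.2)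
  have h3 : HasDerivAt (fun x => f (x, p.2)) (fderiv ℝ f p (1, 0)) p.1 :=
    (hf.hasFDerivAt.comp_hasDerivAt p.1 h2)
  exact h3.deriv

lemma pdv_eq_fderiv (hf : DifferentiableAt ℝ f p) :
    pdv f p = fderiv ℝ f p (0, 1) := by
  have h2 : HasDerivAt (fun y : ℝ => (p.1, y)) ((0 : ℝ), (1 : ℝ)) p.2 :=
    (hasDerivAt_const p.2 p.1).prodMk (hasDerivAt_id p.2)
  have h3 : HasDerivAt (fun y => f (p.1, y)) (fderiv ℝ f p (0, 1)) p.2 :=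
    (hf.hasFDerivAt.comp_hasDerivAt p.2 h2)
  exact h3.deriv

lemma contDiffOn_pdu (hU : IsOpen U) (hf : ContDiffOn ℝ ∞ f U) :
    ContDiffOn ℝ ∞ (pdu f) U := by
  have hfd : ContDiffOn ℝ ∞ (fun q => fderiv ℝ f q) U :=
    hf.fderiv_of_isOpen hU le_rfl
  have h : ContDiffOn ℝ ∞ (fun q => fderiv ℝ f q ((1 : ℝ), (0 : ℝ))) U :=
    hfd.clm_apply contDiffOn_const
  refine h.congr fun q hq => ?_
  exact pdu_eq_fderiv ((hf.contDiffAt (hU.mem_nhds hq)).differentiableAt hle1)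

lemma contDiffOn_pdv (hU : IsOpen U) (hf : ContDiffOn ℝ ∞ f U) :
    ContDiffOn ℝ ∞ (pdv f) U := by
  have hfd : ContDiffOn ℝ ∞ (fun q => fderiv ℝ f q) U :=
    hf.fderiv_of_isOpen hU le_rfl
  have h : ContDiffOn ℝ ∞ (fun q => fderiv ℝ f q ((0 : ℝ), (1 : ℝ))) U :=
    hfd.clm_apply contDiffOn_const
  refine h.congr fun q hq => ?_
  exact pdv_eq_fderiv ((hf.contDiffAt (hU.mem_nhds hq)).differentiableAt hle1)

lemma pdu_pdv_symm (hU : IsOpen U) (hp : p ∈ U) (hf : ContDiffOn ℝ ∞ f U) :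
    pdu (pdv f) p = pdv (pdu f) p := by
  have hfa : ContDiffAt ℝ ∞ f p := hf.contDiffAt (hU.mem_nhds hp)
  have hsymm : IsSymmSndFDerivAt ℝ f p :=
    hfa.isSymmSndFDerivAt (by simpa using hle2)
  have hfd : ContDiffOn ℝ ∞ (fun q => fderiv ℝ f q) U := hf.fderiv_of_isOpen hU le_rfl
  have hfdp : DifferentiableAt ℝ (fun q => fderiv ℝ f q) p :=
    ((hfd.contDiffAt (hU.mem_nhds hp)).differentiableAt hle1)
  have hdv : DifferentiableAt ℝ (pdv f) p := by
    have : DifferentiableAt ℝ (fun q => fderiv ℝ f q ((0:ℝ), (1:ℝ))) p :=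
      hfdp.clm_apply (differentiableAt_const _)
    refine this.congr_of_eventuallyEq ?_
    filter_upwards [hU.mem_nhds hp] with q hq
    exact pdv_eq_fderiv ((hf.contDiffAt (hU.mem_nhds hq)).differentiableAt hle1)
  have hdu : DifferentiableAt ℝ (pdu f) p := by
    have : DifferentiableAt ℝ (fun q => fderiv ℝ f q ((1:ℝ), (0:ℝ))) p :=
      hfdp.clm_apply (differentiableAt_const _)
    refine this.congr_of_eventuallyEq ?_
    filter_upwards [hU.mem_nhds hp] with q hq
    exact pdu_eq_fderiv ((hf.contDiffAt (hU.mem_nhds hq)).differentiableAt hle1)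
  have h1 : pdu (pdv f) p = fderiv ℝ (fun q => fderiv ℝ f q ((0:ℝ),(1:ℝ))) p (1, 0) := by
    rw [pdu_congrOn hU hp (g := fun q => fderiv ℝ f q ((0:ℝ),(1:ℝ)))
      (fun q hq => pdv_eq_fderiv ((hf.contDiffAt (hU.mem_nhds hq)).differentiableAt hle1))]
    exact pdu_eq_fderiv (hfdp.clm_apply (differentiableAt_const _))
  have h2 : pdv (pdu f) p = fderiv ℝ (fun q => fderiv ℝ f q ((1:ℝ),(0:ℝ))) p (0, 1) := by
    rw [pdv_congrOn hU hp (g := fun q => fderiv ℝ f q ((1:ℝ),(0:ℝ)))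
      (fun q hq => pdu_eq_fderiv ((hf.contDiffAt (hU.mem_nhds hq)).differentiableAt hle1))]
    exact pdv_eq_fderiv (hfdp.clm_apply (differentiableAt_const _))
  rw [h1, h2]
  rw [fderiv_clm_apply hfdp (differentiableAt_const _),
      fderiv_clm_apply hfdp (differentiableAt_const _)]
  simp only [fderiv_const, fderiv_fun_const, Pi.zero_apply, ContinuousLinearMap.add_apply,
    ContinuousLinearMap.comp_apply, ContinuousLinearMap.flip_apply,
    ContinuousLinearMap.zero_apply, add_zero]
  exact (hsymm (1,0) (0,1)).symm ▸ rfl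

end Infra

def wfun (M : ℝ) (r : ℝ × ℝ → ℝ) : ℝ × ℝ → ℝ := fun q => Dfun M r q / (r q) ^ 2
def gfun (M : ℝ) (r : ℝ × ℝ → ℝ) : ℝ × ℝ → ℝ := fun q => (2 * r q - 6 * M) / (r q) ^ 2

structure GeomHyp (M : ℝ) (r : ℝ × ℝ → ℝ) (U : Set (ℝ × ℝ)) : Prop where
  hM : 0 ≤ M
  hU : IsOpen U
  hr : ContDiffOn ℝ ∞ r U
  hr2M : ∀ p ∈ U, 2 * M < r p
  hru : ∀ p ∈ U, pdu r p = -(1 - 2 * M / r p)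
  hrv : ∀ p ∈ U, pdv r p = 1 - 2 * M / r p

namespace GeomHyp

variable {M : ℝ} {r : ℝ × ℝ → ℝ} {U : Set (ℝ × ℝ)} {p : ℝ × ℝ} {f : ℝ × ℝ → ℝ}
variable (G : GeomHyp M r U)
include G

lemma rpos (hp : p ∈ U) : 0 < r p :=
  lt_of_le_of_lt (by nlinarith [G.hM]) (G.hr2M p hp)

lemma rne (hp : p ∈ U) : r p ≠ 0 := (G.rpos hp).ne'

lemma Dpos (hp : p ∈ U) : 0 < Dfun M r p := by
  have h1 := G.rpos hp
  have h2 := G.hr2M p hp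
  have : 2 * M / r p < 1 := (div_lt_one h1).2 h2
  simp only [Dfun]; linarith

lemma Dne (hp : p ∈ U) : Dfun M r p ≠ 0 := (G.Dpos hp).ne'

lemma wpos (hp : p ∈ U) : 0 < wfun M r p :=
  div_pos (G.Dpos hp) (pow_pos (G.rpos hp) 2)

lemma wne (hp : p ∈ U) : wfun M r p ≠ 0 := (G.wpos hp).ne'

lemma diffAt (hf : ContDiffOn ℝ ∞ f U) (hp : p ∈ U) : DifferentiableAt ℝ f p :=
  (hf.contDiffAt (G.hU.mem_nhds hp)).differentiableAt hle1

lemma sliceU (hf : ContDiffOn ℝ ∞ f U) (hp : p ∈ U) :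
    HasDerivAt (fun x => f (x, p.2)) (pdu f p) p.1 :=
  hasDerivAt_sliceU (G.diffAt hf hp)

lemma sliceV (hf : ContDiffOn ℝ ∞ f U) (hp : p ∈ U) :
    HasDerivAt (fun y => f (p.1, y)) (pdv f p) p.2 :=
  hasDerivAt_sliceV (G.diffAt hf hp)

lemma Dsm : ContDiffOn ℝ ∞ (Dfun M r) U :=
  contDiffOn_const.sub (contDiffOn_const.div G.hr fun q hq => G.rne hq)

lemma wsm : ContDiffOn ℝ ∞ (wfun M r) U :=
  G.Dsm.div (G.hr.pow 2) fun q hq => pow_ne_zero _ (G.rne hq)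

lemma gsm : ContDiffOn ℝ ∞ (gfun M r) U :=
  ((contDiffOn_const.mul G.hr).sub contDiffOn_const).div (G.hr.pow 2)
    fun q hq => pow_ne_zero _ (G.rne hq)

lemma zpowsm (hf : ContDiffOn ℝ ∞ f U) (hne : ∀ q ∈ U, f q ≠ 0) (k : ℤ) :
    ContDiffOn ℝ ∞ (fun q => f q ^ k) U := by
  cases k with
  | ofNat n => simpa using hf.pow n
  | negSucc n =>
      simp only [zpow_negSucc]
      exact (hf.pow (n + 1)).inv fun q hq => pow_ne_zero _ (hne q hq)

lemma wksm (k : ℤ) : ContDiffOn ℝ ∞ (fun q => wfun M r q ^ k) U :=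
  G.zpowsm G.wsm (fun q hq => G.wne hq) k

lemma Pusm (hf : ContDiffOn ℝ ∞ f U) : ContDiffOn ℝ ∞ (Pu M r f) U :=
  ((G.hr.pow 2).div G.Dsm fun q hq => G.Dne hq).mul (contDiffOn_pdu G.hU hf)

lemma itersm (hf : ContDiffOn ℝ ∞ f U) (N : ℕ) : ContDiffOn ℝ ∞ ((Pu M r)^[N] f) U := by
  induction N with
  | zero => simpa using hf
  | succ n ih => rw [Function.iterate_succ_apply']; exact G.Pusm ih

lemma rU (hp : p ∈ U) : HasDerivAt (fun x => r (x, p.2)) (-(Dfun M r p)) p.1 := by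
  have h := G.sliceU G.hr hp
  rwa [G.hru p hp] at h

lemma rV (hp : p ∈ U) : HasDerivAt (fun y => r (p.1, y)) (Dfun M r p) p.2 := by
  have h := G.sliceV G.hr hp
  rwa [G.hrv p hp] at h

lemma DU (hp : p ∈ U) :
    HasDerivAt (fun x => Dfun M r (x, p.2)) (-(2 * M * Dfun M r p / (r p) ^ 2)) p.1 := by
  have h := (hasDerivAt_const p.1 (1 : ℝ)).sub
    (((G.rU hp).inv (G.rne hp)).const_mul (2 * M))
  have : (0 : ℝ) - 2 * M * (-(-(Dfun M r p)) / r p ^ 2) = -(2 * M * Dfun M r p / (r p) ^ 2) := by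
    ring
  rw [this] at h
  exact h.congr_deriv rfl |>.congr_of_eventuallyEq (by
    filter_upwards with x
    simp [Dfun, div_eq_mul_inv])

lemma DV (hp : p ∈ U) :
    HasDerivAt (fun y => Dfun M r (p.1, y)) (2 * M * Dfun M r p / (r p) ^ 2) p.2 := by
  have h := (hasDerivAt_const p.2 (1 : ℝ)).sub
    (((G.rV hp).inv (G.rne hp)).const_mul (2 * M))
  have : (0 : ℝ) - 2 * M * (-(Dfun M r p) / r p ^ 2) = 2 * M * Dfun M r p / (r p) ^ 2 := by
    ring
  rw [this] at h
  exact h.congr_of_eventuallyEq (by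
    filter_upwards with y
    simp [Dfun, div_eq_mul_inv])

end GeomHyp

namespace GeomHyp
variable {M : ℝ} {r : ℝ × ℝ → ℝ} {U : Set (ℝ × ℝ)} {p : ℝ × ℝ} {f : ℝ × ℝ → ℝ}
variable (G : GeomHyp M r U)
include G

lemma wU (hp : p ∈ U) :
    HasDerivAt (fun x => wfun M r (x, p.2)) (wfun M r p * gfun M r p) p.1 := by
  have hrne := G.rne hp
  have h := (G.DU hp).fun_div ((G.rU hp).fun_pow 2) (pow_ne_zero _ hrne)
  simp only [Prod.mk.eta] at h
  refine h.congr_deriv ?_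
  simp only [wfun, gfun, Dfun]
  push_cast
  field_simp
  ring

lemma wV (hp : p ∈ U) :
    HasDerivAt (fun y => wfun M r (p.1, y)) (-(wfun M r p * gfun M r p)) p.2 := by
  have hrne := G.rne hp
  have h := (G.DV hp).fun_div ((G.rV hp).fun_pow 2) (pow_ne_zero _ hrne)
  simp only [Prod.mk.eta] at h
  refine h.congr_deriv ?_
  simp only [wfun, gfun, Dfun]
  push_cast
  field_simp
  ring

lemma wkU (hp : p ∈ U) (k : ℤ) :
    HasDerivAt (fun x => wfun M r (x, p.2) ^ k)
      ((k : ℝ) * wfun M r p ^ k * gfun M r p) p.1 := by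
  have h := (hasDerivAt_zpow k (wfun M r p) (Or.inl (G.wne hp))).comp p.1 (G.wU hp)
  simp only [Function.comp_def] at h
  refine h.congr_deriv ?_
  rw [zpow_sub_one₀ (G.wne hp)]
  field_simp [G.wne hp]

lemma wkV (hp : p ∈ U) (k : ℤ) :
    HasDerivAt (fun y => wfun M r (p.1, y) ^ k)
      (-((k : ℝ) * wfun M r p ^ k * gfun M r p)) p.2 := by
  have h := (hasDerivAt_zpow k (wfun M r p) (Or.inl (G.wne hp))).comp p.2 (G.wV hp)
  simp only [Function.comp_def] at h
  refine h.congr_deriv ?_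
  rw [zpow_sub_one₀ (G.wne hp)]
  field_simp [G.wne hp]

lemma gU (hp : p ∈ U) :
    HasDerivAt (fun x => gfun M r (x, p.2)) (wfun M r p * (2 - 12 * M / r p)) p.1 := by
  have hrne := G.rne hp
  have h := (((G.rU hp).const_mul 2).sub_const (6 * M)).fun_div ((G.rU hp).fun_pow 2)
    (pow_ne_zero _ hrne)
  simp only [Prod.mk.eta] at h
  have h2 : HasDerivAt (fun x => gfun M r (x, p.2)) _ p.1 := h
  convert h2 using 1
  simp only [wfun, gfun, Dfun]
  push_cast
  field_simp
  ring

lemma gV (hp : p ∈ U) :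
    HasDerivAt (fun y => gfun M r (p.1, y)) (wfun M r p * (12 * M / r p - 2)) p.2 := by
  have hrne := G.rne hp
  have h := (((G.rV hp).const_mul 2).sub_const (6 * M)).fun_div ((G.rV hp).fun_pow 2)
    (pow_ne_zero _ hrne)
  simp only [Prod.mk.eta] at h
  have h2 : HasDerivAt (fun y => gfun M r (p.1, y)) _ p.2 := h
  convert h2 using 1
  simp only [wfun, gfun, Dfun]
  push_cast
  field_simp
  ring

lemma MrU (hp : p ∈ U) :
    HasDerivAt (fun x => 2 * M / r (x, p.2)) (2 * M * wfun M r p) p.1 := by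
  have hrne := G.rne hp
  have h := ((G.rU hp).fun_inv hrne).const_mul (2 * M)
  simp only [Prod.mk.eta] at h
  have h2 : HasDerivAt (fun x => 2 * M / r (x, p.2))
      (2 * M * (- -Dfun M r p / r p ^ 2)) p.1 := by
    refine h.congr_of_eventuallyEq ?_
    filter_upwards with x
    rw [div_eq_mul_inv]
  convert h2 using 1
  simp only [wfun]
  ring

lemma MrV (hp : p ∈ U) :
    HasDerivAt (fun y => 2 * M / r (p.1, y)) (-(2 * M * wfun M r p)) p.2 := by
  have hrne := G.rne hp
  have h := ((G.rV hp).fun_inv hrne).const_mul (2 * M)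
  simp only [Prod.mk.eta] at h
  have h2 : HasDerivAt (fun y => 2 * M / r (p.1, y))
      (2 * M * (-Dfun M r p / r p ^ 2)) p.2 := by
    refine h.congr_of_eventuallyEq ?_
    filter_upwards with y
    rw [div_eq_mul_inv]
  convert h2 using 1
  simp only [wfun]
  ring

end GeomHyp

namespace GeomHyp
variable {M : ℝ} {r : ℝ × ℝ → ℝ} {U : Set (ℝ × ℝ)} {p : ℝ × ℝ}
variable (G : GeomHyp M r U)
include G

lemma wpow_eq (hp : p ∈ U) (s : ℤ) :
    (r p) ^ (-(2 * s)) * (Dfun M r p) ^ s = wfun M r p ^ s := by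
  have hrne := G.rne hp
  have hr2 : (r p ^ 2 : ℝ) = r p ^ (2 : ℤ) := by simp [zpow_ofNat]
  simp only [wfun]
  rw [div_zpow, hr2, ← zpow_mul]
  rw [zpow_neg, div_eq_mul_inv, mul_comm]

lemma coeff1 (hp : p ∈ U) (s : ℤ) :
    (Dfun M r p) ^ (s + 1) * (r p) ^ (-2 - 2 * s) = wfun M r p ^ s * wfun M r p := by
  have hrne := G.rne hp
  have hDne := G.Dne hp
  rw [← G.wpow_eq hp s]
  rw [zpow_add_one₀ hDne, show (-2 - 2*s : ℤ) = -(2*s) + (-2) by ring, zpow_add₀ hrne]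
  simp only [wfun, Dfun]
  have : (r p : ℝ) ^ (-2 : ℤ) = (r p ^ 2)⁻¹ := by
    rw [zpow_neg]; simp [zpow_ofNat]
  rw [this]
  ring

lemma coeff2 (hp : p ∈ U) (s : ℤ) :
    (Dfun M r p) ^ (s + 1) * (r p) ^ (-3 - 2 * s) = wfun M r p ^ s * wfun M r p / r p := by
  have hrne := G.rne hp
  have hDne := G.Dne hp
  rw [← G.wpow_eq hp s]
  rw [zpow_add_one₀ hDne, show (-3 - 2*s : ℤ) = -(2*s) + (-3) by ring, zpow_add₀ hrne]
  have : (r p : ℝ) ^ (-3 : ℤ) = (r p ^ 2)⁻¹ / r p := by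
    rw [show (-3 : ℤ) = -2 + -1 by ring, zpow_add₀ hrne, zpow_neg, zpow_neg]
    simp [zpow_ofNat, div_eq_mul_inv]
  rw [this]
  simp only [wfun]
  ring

end GeomHyp

namespace GeomHyp
variable {M : ℝ} {r : ℝ × ℝ → ℝ} {U : Set (ℝ × ℝ)} {p : ℝ × ℝ}
variable (G : GeomHyp M r U)
include G

lemma betasm {s : ℤ} {α β : ℝ × ℝ → ℝ} (hα : ContDiffOn ℝ ∞ α U)
    (hβ : β = fun q => (r q) ^ (-(2 * s)) * (Dfun M r q) ^ s * α q) :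
    ContDiffOn ℝ ∞ β U := by
  rw [hβ]
  exact ((G.zpowsm G.hr (fun q hq => G.rne hq) _).mul
    (G.zpowsm G.Dsm (fun q hq => G.Dne hq) _)).mul hα

lemma betaw {s : ℤ} {α β : ℝ × ℝ → ℝ}
    (hβ : β = fun q => (r q) ^ (-(2 * s)) * (Dfun M r q) ^ s * α q) :
    ∀ q ∈ U, β q = wfun M r q ^ s * α q := by
  intro q hq
  rw [hβ]
  simp only
  rw [G.wpow_eq hq s]

lemma baseCase (s ℓ : ℤ) (α β : ℝ × ℝ → ℝ) (hα : ContDiffOn ℝ ∞ α U)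
    (hTeuk : TeukSol M r U s ℓ α)
    (hβ : β = fun q => (r q) ^ (-(2 * s)) * (Dfun M r q) ^ s * α q) (hp : p ∈ U) :
    pdv (fun q => wfun M r q ^ (-s) * pdu β q) p =
      wfun M r p ^ (1 - s) *
        ((((-(ℓ - s) * (ℓ + s + 1) - 2 * s : ℤ) : ℝ)
          - (((1 - s) * (1 - 2 * s) : ℤ) : ℝ) * (2 * M / r p)) * β p) := by
  have hwne := G.wne hp
  have hrne := G.rne hp
  have hDne := G.Dne hp
  have hWne : wfun M r p ^ s ≠ 0 := zpow_ne_zero s hwne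
  have hβw := G.betaw (α := α) hβ
  -- expand pdu β on U
  have hpduβ : ∀ q ∈ U, pdu β q =
      (s : ℝ) * wfun M r q ^ s * gfun M r q * α q + wfun M r q ^ s * pdu α q := by
    intro q hq
    have h1 : pdu β q = pdu (fun q' => wfun M r q' ^ s * α q') q :=
      pdu_congrOn G.hU hq hβw
    rw [h1]
    have H := (G.wkU hq s).mul (G.sliceU hα hq)
    simp only [pdu]
    exact H.deriv
  -- LHS function rewritten
  have hLf : ∀ q ∈ U, wfun M r q ^ (-s) * pdu β q =
      (s : ℝ) * gfun M r q * α q + pdu α q := by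
    intro q hq
    rw [hpduβ q hq]
    have hW : wfun M r q ^ s ≠ 0 := zpow_ne_zero s (G.wne hq)
    rw [zpow_neg]
    field_simp
  have hL : pdv (fun q => wfun M r q ^ (-s) * pdu β q) p =
      pdv (fun q => (s : ℝ) * gfun M r q * α q + pdu α q) p :=
    pdv_congrOn G.hU hp hLf
  -- compute that pdv
  have hL2 : pdv (fun q => (s : ℝ) * gfun M r q * α q + pdu α q) p =
      ((0 * gfun M r p + (s : ℝ) * (wfun M r p * (12 * M / r p - 2))) * α p
        + (s : ℝ) * gfun M r p * pdv α p) + pdv (pdu α) p := by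
    have H1 := ((hasDerivAt_const p.2 ((s : ℝ))).mul (G.gV hp)).mul (G.sliceV hα hp)
    have H2 := G.sliceV (contDiffOn_pdu G.hU hα) hp
    have H := H1.add H2
    simp only [pdv]
    exact H.deriv
  -- mixed partials
  have hsymm : pdv (pdu α) p = pdu (pdv α) p := (pdu_pdv_symm G.hU hp hα).symm
  -- Teukolsky
  have hT := hTeuk p hp
  have hTL : pdu (fun q => (r q) ^ (-(2 * s)) * (Dfun M r q) ^ s * pdv α q) p =
      pdu (fun q => wfun M r q ^ s * pdv α q) p := by
    refine pdu_congrOn G.hU hp fun q hq => ?_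
    rw [G.wpow_eq hq s]
  have hTL2 : pdu (fun q => wfun M r q ^ s * pdv α q) p =
      (s : ℝ) * wfun M r p ^ s * gfun M r p * pdv α p
        + wfun M r p ^ s * pdu (pdv α) p := by
    have H := (G.wkU hp s).mul (G.sliceU (contDiffOn_pdv G.hU hα) hp)
    simp only [pdu]
    exact H.deriv
  rw [hTL, hTL2, G.coeff1 hp] at hT
  have hc2 : 2 * M * Dfun M r p ^ (s + 1) * r p ^ (-3 - 2 * s) =
      2 * M * (wfun M r p ^ s * wfun M r p / r p) := by
    rw [mul_assoc, G.coeff2 hp]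
  rw [hc2] at hT
  -- isolate pdu (pdv α)
  have hpduv : pdu (pdv α) p =
      wfun M r p * ((-(ℓ - s) * (ℓ + s + 1) : ℤ) : ℝ) * α p
        - 2 * M * (wfun M r p / r p) * (((1 + s) * (1 + 2 * s) : ℤ) : ℝ) * α p
        - (s : ℝ) * gfun M r p * pdv α p := by
    have h0 : wfun M r p ^ s * (pdu (pdv α) p -
        (wfun M r p * ((-(ℓ - s) * (ℓ + s + 1) : ℤ) : ℝ) * α p
          - 2 * M * (wfun M r p / r p) * (((1 + s) * (1 + 2 * s) : ℤ) : ℝ) * α p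
          - (s : ℝ) * gfun M r p * pdv α p)) = 0 := by
      linear_combination hT
    rcases mul_eq_zero.1 h0 with h | h
    · exact absurd h hWne
    · linarith [h]
  -- final assembly
  rw [hL, hL2, hsymm, hpduv, hβw p hp]
  have hz : wfun M r p ^ (1 - s) * wfun M r p ^ s = wfun M r p := by
    rw [← zpow_add₀ hwne]
    norm_num
  rw [show wfun M r p ^ (1 - s) *
      ((((-(ℓ - s) * (ℓ + s + 1) - 2 * s : ℤ) : ℝ)
        - (((1 - s) * (1 - 2 * s) : ℤ) : ℝ) * (2 * M / r p)) * (wfun M r p ^ s * α p)) =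
      (wfun M r p ^ (1 - s) * wfun M r p ^ s) *
      ((((-(ℓ - s) * (ℓ + s + 1) - 2 * s : ℤ) : ℝ)
        - (((1 - s) * (1 - 2 * s) : ℤ) : ℝ) * (2 * M / r p)) * α p) from by ring, hz]
  push_cast
  ring

end GeomHyp

namespace GeomHyp
variable {M : ℝ} {r : ℝ × ℝ → ℝ} {U : Set (ℝ × ℝ)} {p : ℝ × ℝ}
variable (G : GeomHyp M r U)
include G

lemma chain (β : ℝ × ℝ → ℝ) (K : ℕ) :
    ∀ q ∈ U, pdu ((Pu M r)^[K] β) q = wfun M r q * (Pu M r)^[K + 1] β q := by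
  intro q hq
  rw [Function.iterate_succ_apply']
  simp only [Pu, wfun]
  field_simp [G.rne hq, G.Dne hq]

lemma chain' (β : ℝ × ℝ → ℝ) (s : ℤ) (n : ℕ) :
    ∀ q ∈ U, ((n : ℝ) * ((n : ℝ) - (s : ℝ)) * ((n : ℝ) - 2 * (s : ℝ))) *
        pdu ((Pu M r)^[n - 1] β) q =
      ((n : ℝ) * ((n : ℝ) - (s : ℝ)) * ((n : ℝ) - 2 * (s : ℝ))) *
        (wfun M r q * (Pu M r)^[n] β q) := by
  intro q hq
  cases n with
  | zero => simp
  | succ j =>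
      rw [Nat.succ_sub_one, G.chain β j q hq]

end GeomHyp

namespace GeomHyp
variable {M : ℝ} {r : ℝ × ℝ → ℝ} {U : Set (ℝ × ℝ)}
variable (G : GeomHyp M r U)
include G

lemma key (s ℓ : ℤ) (α β : ℝ × ℝ → ℝ) (hα : ContDiffOn ℝ ∞ α U)
    (hTeuk : TeukSol M r U s ℓ α)
    (hβ : β = fun q => (r q) ^ (-(2 * s)) * (Dfun M r q) ^ s * α q) :
    ∀ N : ℕ, ∀ p ∈ U,
      pdv (fun q => wfun M r q ^ ((N : ℤ) - s) * pdu ((Pu M r)^[N] β) q) p =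
        wfun M r p ^ ((N : ℤ) - s + 1) *
          ((((((N : ℤ) * ((N : ℤ) + 1 - 2 * s) : ℤ) : ℝ)
                + ((-(ℓ - s) * (ℓ + s + 1) - 2 * s : ℤ) : ℝ)
                - (((1 - s) * (1 - 2 * s) + 3 * (N : ℤ) * ((N : ℤ) + 1 - 2 * s) : ℤ) : ℝ) *
                  (2 * M / r p)) *
              ((Pu M r)^[N] β) p) -
            2 * M * (((N : ℤ) * ((N : ℤ) - s) * ((N : ℤ) - 2 * s) : ℤ) : ℝ) *
              ((Pu M r)^[N - 1] β) p) := by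
  have hβsm := G.betasm hα hβ
  intro N
  induction N with
  | zero =>
      intro p hp
      have hb := G.baseCase s ℓ α β hα hTeuk hβ hp
      simp only [Nat.cast_zero, Nat.zero_sub, Function.iterate_zero, id_eq, zero_sub]
      rw [show (-s + 1 : ℤ) = 1 - s by ring, hb]
      push_cast
      ring
  | succ n ih =>
      intro p hp
      have hwne := G.wne hp
      have hBnsm := G.itersm hβsm n
      have hBn1sm := G.itersm hβsm (n + 1)
      have hBn0sm := G.itersm hβsm (n - 1)
      have hc : ((n + 1 : ℕ) : ℤ) = (n : ℤ) + 1 := by push_cast; ring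
      simp only [hc, Nat.add_sub_cancel,
        show ((n : ℤ) + 1 - s) = ((n : ℤ) - s + 1) by ring]
      -- IH transported to the function wfun^m * β_{n+1}
      have hF2 : ∀ x ∈ U,
          pdv (fun q => wfun M r q ^ ((n : ℤ) - s + 1) * (Pu M r)^[n + 1] β q) x =
            wfun M r x ^ ((n : ℤ) - s + 1) *
              ((((((n : ℤ) * ((n : ℤ) + 1 - 2 * s) : ℤ) : ℝ)
                    + ((-(ℓ - s) * (ℓ + s + 1) - 2 * s : ℤ) : ℝ)
                    - (((1 - s) * (1 - 2 * s) + 3 * (n : ℤ) * ((n : ℤ) + 1 - 2 * s) : ℤ) : ℝ) *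
                      (2 * M / r x)) *
                  ((Pu M r)^[n] β) x) -
                2 * M * (((n : ℤ) * ((n : ℤ) - s) * ((n : ℤ) - 2 * s) : ℤ) : ℝ) *
                  ((Pu M r)^[n - 1] β) x) := by
        intro x hx
        have h1 : ∀ q ∈ U, wfun M r q ^ ((n : ℤ) - s) * pdu ((Pu M r)^[n] β) q =
            wfun M r q ^ ((n : ℤ) - s + 1) * (Pu M r)^[n + 1] β q := by
          intro q hq
          rw [G.chain β n q hq, zpow_add_one₀ (G.wne hq)]
          ring
        rw [← pdv_congrOn G.hU hx h1]
        exact ih x hx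
      have hFsm : ContDiffOn ℝ ∞
          (fun q => wfun M r q ^ ((n : ℤ) - s + 1) * (Pu M r)^[n + 1] β q) U :=
        (G.wksm ((n : ℤ) - s + 1)).mul hBn1sm
      have hsymmF :
          pdu (pdv (fun q => wfun M r q ^ ((n : ℤ) - s + 1) * (Pu M r)^[n + 1] β q)) p =
          pdv (pdu (fun q => wfun M r q ^ ((n : ℤ) - s + 1) * (Pu M r)^[n + 1] β q)) p :=
        pdu_pdv_symm G.hU hp hFsm
      have hA :
          pdu (pdv (fun q => wfun M r q ^ ((n : ℤ) - s + 1) * (Pu M r)^[n + 1] β q)) p =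
          pdu (fun x => wfun M r x ^ ((n : ℤ) - s + 1) *
              ((((((n : ℤ) * ((n : ℤ) + 1 - 2 * s) : ℤ) : ℝ)
                    + ((-(ℓ - s) * (ℓ + s + 1) - 2 * s : ℤ) : ℝ)
                    - (((1 - s) * (1 - 2 * s) + 3 * (n : ℤ) * ((n : ℤ) + 1 - 2 * s) : ℤ) : ℝ) *
                      (2 * M / r x)) *
                  ((Pu M r)^[n] β) x) -
                2 * M * (((n : ℤ) * ((n : ℤ) - s) * ((n : ℤ) - 2 * s) : ℤ) : ℝ) *
                  ((Pu M r)^[n - 1] β) x)) p :=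
        pdu_congrOn G.hU hp hF2
      -- explicit pdu of the RHS function
      have HA' : HasDerivAt (fun x : ℝ =>
            ((((n : ℤ) * ((n : ℤ) + 1 - 2 * s) : ℤ) : ℝ)
              + ((-(ℓ - s) * (ℓ + s + 1) - 2 * s : ℤ) : ℝ)
              - (((1 - s) * (1 - 2 * s) + 3 * (n : ℤ) * ((n : ℤ) + 1 - 2 * s) : ℤ) : ℝ) *
                (2 * M / r (x, p.2))))
          (0 - (((1 - s) * (1 - 2 * s) + 3 * (n : ℤ) * ((n : ℤ) + 1 - 2 * s) : ℤ) : ℝ) *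
            (2 * M * wfun M r p)) p.1 :=
        (hasDerivAt_const p.1 _).sub
          (HasDerivAt.const_mul _ (G.MrU hp))
      have Hinner := (HA'.mul (G.sliceU hBnsm hp)).sub
        (HasDerivAt.const_mul
          (2 * M * (((n : ℤ) * ((n : ℤ) - s) * ((n : ℤ) - 2 * s) : ℤ) : ℝ))
          (G.sliceU hBn0sm hp))
      have H := (G.wkU hp ((n : ℤ) - s + 1)).mul Hinner
      have hpduRHS :
          pdu (fun x => wfun M r x ^ ((n : ℤ) - s + 1) *
              ((((((n : ℤ) * ((n : ℤ) + 1 - 2 * s) : ℤ) : ℝ)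
                    + ((-(ℓ - s) * (ℓ + s + 1) - 2 * s : ℤ) : ℝ)
                    - (((1 - s) * (1 - 2 * s) + 3 * (n : ℤ) * ((n : ℤ) + 1 - 2 * s) : ℤ) : ℝ) *
                      (2 * M / r x)) *
                  ((Pu M r)^[n] β) x) -
                2 * M * (((n : ℤ) * ((n : ℤ) - s) * ((n : ℤ) - 2 * s) : ℤ) : ℝ) *
                  ((Pu M r)^[n - 1] β) x)) p =
          (((n : ℤ) - s + 1 : ℤ) : ℝ) * wfun M r p ^ ((n : ℤ) - s + 1) * gfun M r p *
              ((((((n : ℤ) * ((n : ℤ) + 1 - 2 * s) : ℤ) : ℝ)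
                    + ((-(ℓ - s) * (ℓ + s + 1) - 2 * s : ℤ) : ℝ)
                    - (((1 - s) * (1 - 2 * s) + 3 * (n : ℤ) * ((n : ℤ) + 1 - 2 * s) : ℤ) : ℝ) *
                      (2 * M / r p)) *
                  ((Pu M r)^[n] β) p) -
                2 * M * (((n : ℤ) * ((n : ℤ) - s) * ((n : ℤ) - 2 * s) : ℤ) : ℝ) *
                  ((Pu M r)^[n - 1] β) p)
            + wfun M r p ^ ((n : ℤ) - s + 1) *
              ((0 - (((1 - s) * (1 - 2 * s) + 3 * (n : ℤ) * ((n : ℤ) + 1 - 2 * s) : ℤ) : ℝ) *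
                  (2 * M * wfun M r p)) * ((Pu M r)^[n] β) p
                + ((((n : ℤ) * ((n : ℤ) + 1 - 2 * s) : ℤ) : ℝ)
                    + ((-(ℓ - s) * (ℓ + s + 1) - 2 * s : ℤ) : ℝ)
                    - (((1 - s) * (1 - 2 * s) + 3 * (n : ℤ) * ((n : ℤ) + 1 - 2 * s) : ℤ) : ℝ) *
                      (2 * M / r p)) * pdu ((Pu M r)^[n] β) p
                - 2 * M * (((n : ℤ) * ((n : ℤ) - s) * ((n : ℤ) - 2 * s) : ℤ) : ℝ) *
                  pdu ((Pu M r)^[n - 1] β) p) := by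
        simp only [pdu]
        exact H.deriv
      -- expansion of pdu F on U
      have hpduF : ∀ q ∈ U,
          pdu (fun q' => wfun M r q' ^ ((n : ℤ) - s + 1) * (Pu M r)^[n + 1] β q') q =
            (((n : ℤ) - s + 1 : ℤ) : ℝ) * gfun M r q *
                (wfun M r q ^ ((n : ℤ) - s + 1) * (Pu M r)^[n + 1] β q)
              + wfun M r q ^ ((n : ℤ) - s + 1) * pdu ((Pu M r)^[n + 1] β) q := by
        intro q hq
        have H2 := (G.wkU hq ((n : ℤ) - s + 1)).mul (G.sliceU hBn1sm hq)
        have h6 : pdu (fun q' => wfun M r q' ^ ((n : ℤ) - s + 1) * (Pu M r)^[n + 1] β q') q =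
            (((n : ℤ) - s + 1 : ℤ) : ℝ) * wfun M r q ^ ((n : ℤ) - s + 1) * gfun M r q *
                (Pu M r)^[n + 1] β q
              + wfun M r q ^ ((n : ℤ) - s + 1) * pdu ((Pu M r)^[n + 1] β) q := H2.deriv
        rw [h6]
        ring
      -- split pdv (pdu F)
      have hterm1sm : ContDiffOn ℝ ∞ (fun q => (((n : ℤ) - s + 1 : ℤ) : ℝ) * gfun M r q *
          (wfun M r q ^ ((n : ℤ) - s + 1) * (Pu M r)^[n + 1] β q)) U :=
        (contDiffOn_const.mul G.gsm).mul ((G.wksm _).mul hBn1sm)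
      have hXsm : ContDiffOn ℝ ∞
          (fun q => wfun M r q ^ ((n : ℤ) - s + 1) * pdu ((Pu M r)^[n + 1] β) q) U :=
        (G.wksm _).mul (contDiffOn_pdu G.hU hBn1sm)
      have hsplit :
          pdv (pdu (fun q => wfun M r q ^ ((n : ℤ) - s + 1) * (Pu M r)^[n + 1] β q)) p =
          pdv (fun q => (((n : ℤ) - s + 1 : ℤ) : ℝ) * gfun M r q *
              (wfun M r q ^ ((n : ℤ) - s + 1) * (Pu M r)^[n + 1] β q)) p
            + pdv (fun q => wfun M r q ^ ((n : ℤ) - s + 1) * pdu ((Pu M r)^[n + 1] β) q) p := by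
        rw [pdv_congrOn G.hU hp hpduF]
        have H3 := (G.sliceV hterm1sm hp).add (G.sliceV hXsm hp)
        simp only [pdv]
        exact H3.deriv
      -- pdv of term1
      have hterm1 :
          pdv (fun q => (((n : ℤ) - s + 1 : ℤ) : ℝ) * gfun M r q *
              (wfun M r q ^ ((n : ℤ) - s + 1) * (Pu M r)^[n + 1] β q)) p =
          (0 * gfun M r p + (((n : ℤ) - s + 1 : ℤ) : ℝ) * (wfun M r p * (12 * M / r p - 2))) *
              (wfun M r p ^ ((n : ℤ) - s + 1) * (Pu M r)^[n + 1] β p)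
            + (((n : ℤ) - s + 1 : ℤ) : ℝ) * gfun M r p *
              pdv (fun q => wfun M r q ^ ((n : ℤ) - s + 1) * (Pu M r)^[n + 1] β q) p := by
        have H4 := ((hasDerivAt_const p.2 ((((n : ℤ) - s + 1 : ℤ) : ℝ))).mul (G.gV hp)).mul
          (G.sliceV hFsm hp)
        simp only [pdv]
        exact H4.deriv
      rw [hF2 p hp] at hterm1
      -- assemble
      have h5 : pdv (fun q => wfun M r q ^ ((n : ℤ) - s + 1) *
            pdu ((Pu M r)^[n + 1] β) q) p =
          pdu (pdv (fun q => wfun M r q ^ ((n : ℤ) - s + 1) * (Pu M r)^[n + 1] β q)) p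
            - pdv (fun q => (((n : ℤ) - s + 1 : ℤ) : ℝ) * gfun M r q *
              (wfun M r q ^ ((n : ℤ) - s + 1) * (Pu M r)^[n + 1] β q)) p := by
        rw [hsymmF, hsplit]
        ring
      rw [h5, hA, hpduRHS, hterm1, G.chain β n p hp,
        zpow_add_one₀ hwne ((n : ℤ) - s + 1)]
      push_cast
      linear_combination (-(wfun M r p ^ ((n : ℤ) - s + 1)) * (2 * M)) * G.chain' β s n p hp

end GeomHyp

/-- The `∂ᵤ`-commuted Teukolsky equation (Proposition 8.1, eq. (8.8)), in scalar
fixed-angular-mode form, for `β = r^(−2s) D^s α` and `Λ̃ = Λ − 2s`. -/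
theorem commuted_teukolsky_equation_u
    (M : ℝ) (hM : 0 ≤ M)
    (U : Set (ℝ × ℝ)) (hUopen : IsOpen U)
    (r : ℝ × ℝ → ℝ) (hr : ContDiffOn ℝ ∞ r U)
    (hr2M : ∀ p ∈ U, 2 * M < r p)
    (hru : ∀ p ∈ U, pdu r p = -(1 - 2 * M / r p))
    (hrv : ∀ p ∈ U, pdv r p = 1 - 2 * M / r p)
    (s ℓ : ℤ) (hsl : |s| ≤ ℓ)
    (α : ℝ × ℝ → ℝ) (hα : ContDiffOn ℝ ∞ α U)
    (hTeuk : TeukSol M r U s ℓ α)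
    (β : ℝ × ℝ → ℝ)
    (hβ : β = fun q => (r q) ^ (-(2 * s)) * (Dfun M r q) ^ s * α q) :
    ∀ N : ℕ, 1 ≤ N → ∀ p ∈ U,
      pdv (fun q => (Dfun M r q / (r q) ^ 2) ^ ((N : ℤ) - s) * pdu ((Pu M r)^[N] β) q) p =
        (Dfun M r p / (r p) ^ 2) ^ ((N : ℤ) - s + 1) *
          ((((((N : ℤ) * ((N : ℤ) + 1 - 2 * s) : ℤ) : ℝ)
                + ((-(ℓ - s) * (ℓ + s + 1) - 2 * s : ℤ) : ℝ)
                - (((1 - s) * (1 - 2 * s) + 3 * (N : ℤ) * ((N : ℤ) + 1 - 2 * s) : ℤ) : ℝ) *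
                  (2 * M / r p)) *
              ((Pu M r)^[N] β) p) -
            2 * M * (((N : ℤ) * ((N : ℤ) - s) * ((N : ℤ) - 2 * s) : ℤ) : ℝ) *
              ((Pu M r)^[N - 1] β) p) := by
  intro N _hN p hp
  have G : GeomHyp M r U := ⟨hM, hUopen, hr, hr2M, hru, hrv⟩
  have h := G.key s ℓ α β hα hTeuk hβ N p hp
  simpa only [wfun] using h
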